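/- Let g : ℝ^d × ℝ^p → ℝ be differentiable with ∇_x g L_g-Lipschitz in each variable (‖∇_x g(x, y₁) − ∇_x g(x, y₂)‖ ≤ L_g ‖y₁ − y₂‖ and ‖∇_x g(x₁, y) − ∇_x g(x₂, y)‖ ≤ L_g ‖x₁ − x₂‖). Suppose for every x the function g(x,·) attains its minimum G(x) at a point y*(x) and the quadratic growth condition g(x, y) − G(x) ≥ (μ/2) ‖y − y*(x)‖² holds for all y, with μ > 0; suppose G is differentiable with ∇G(x) = ∇_x g(x, y*(x)) and ∇G is L_G-Lipschitz with L_G ≥ L_g. Then for all x, x⁺ ∈ ℝ^d, y ∈ ℝ^p, γ > 0 and ρ_l > 0: g(x⁺, y) − G(x⁺) ≤ (1 + 4 L_g² γ/(μ ρ_l)) (g(x, y) − G(x)) + (ρ_l/(8γ) + L_G) ‖x⁺ − x‖². -/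

import Mathlib

open scoped RealInnerProductSpace

/-- Descent lemma: if `f` has gradient `f'` everywhere and `f'` satisfies a (pointwise)
Lipschitz-type bound with constant `L`, then
`f y ≤ f x + ⟪f' x, y - x⟫ + L/2 * ‖y - x‖²`. -/
lemma descent_lemma {E : Type*} [NormedAddCommGroup E] [InnerProductSpace ℝ E] [CompleteSpace E]
    (f : E → ℝ) (f' : E → E) (L : ℝ)
    (hf : ∀ z, HasGradientAt f (f' z) z)
    (hlip : ∀ a b, ‖f' a - f' b‖ ≤ L * ‖a - b‖)
    (x y : E) : f y ≤ f x + ⟪f' x, y - x⟫ + L / 2 * ‖y - x‖ ^ 2 := by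
  set Δ := y - x with hΔ
  set ψ : ℝ → ℝ := fun t => f (x + t • Δ) - t * ⟪f' x, Δ⟫ - L / 2 * t ^ 2 * ‖Δ‖ ^ 2 with hψ
  have hc : ∀ t : ℝ, HasDerivAt (fun s : ℝ => x + s • Δ) Δ t := by
    intro t
    simpa using ((hasDerivAt_id t).smul_const Δ).const_add x
  have hd : ∀ t : ℝ, HasDerivAt ψ
      (⟪f' (x + t • Δ), Δ⟫ - ⟪f' x, Δ⟫ - L * t * ‖Δ‖ ^ 2) t := by
    intro t
    have h1 : HasDerivAt (fun s : ℝ => f (x + s • Δ)) ⟪f' (x + t • Δ), Δ⟫ t := by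
      have hfd := hasGradientAt_iff_hasFDerivAt.mp (hf (x + t • Δ))
      have := hfd.comp_hasDerivAt t (hc t)
      simp [InnerProductSpace.toDual_apply_apply] at this
      exact this
    have h2 : HasDerivAt (fun s : ℝ => s * ⟪f' x, Δ⟫) ⟪f' x, Δ⟫ t := by
      simpa using (hasDerivAt_id t).mul_const ⟪f' x, Δ⟫
    have h3 : HasDerivAt (fun s : ℝ => L / 2 * s ^ 2 * ‖Δ‖ ^ 2) (L * t * ‖Δ‖ ^ 2) t := by
      have : HasDerivAt (fun s : ℝ => s ^ 2) (2 * t) t := by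
        simpa using hasDerivAt_pow 2 t
      have := ((this.const_mul (L / 2)).mul_const (‖Δ‖ ^ 2))
      rw [show L * t * ‖Δ‖ ^ 2 = L / 2 * (2 * t) * ‖Δ‖ ^ 2 by ring]
      exact this
    exact (h1.sub h2).sub h3
  have key : ψ 1 ≤ ψ 0 := by
    have hanti : AntitoneOn ψ (Set.Icc 0 1) := by
      apply antitoneOn_of_deriv_nonpos (convex_Icc (0:ℝ) 1)
      · exact fun t _ => (hd t).continuousAt.continuousWithinAt
      · intro t ht
        rw [interior_Icc] at ht
        exact ((hd t).differentiableAt).differentiableWithinAt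
      · intro t ht
        rw [interior_Icc] at ht
        rw [(hd t).deriv]
        have hb : ⟪f' (x + t • Δ) - f' x, Δ⟫ ≤ L * t * ‖Δ‖ ^ 2 := by
          calc ⟪f' (x + t • Δ) - f' x, Δ⟫ ≤ ‖f' (x + t • Δ) - f' x‖ * ‖Δ‖ :=
                real_inner_le_norm _ _
            _ ≤ (L * ‖(x + t • Δ) - x‖) * ‖Δ‖ := by
                have := hlip (x + t • Δ) x
                exact mul_le_mul_of_nonneg_right this (norm_nonneg _)
            _ = L * t * ‖Δ‖ ^ 2 := by
                rw [add_sub_cancel_left, norm_smul, Real.norm_eq_abs,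
                  abs_of_pos ht.1]
                ring
        have := inner_sub_left (𝕜 := ℝ) (f' (x + t • Δ)) (f' x) Δ
        linarith [hb, this.symm.le, this.le]
    exact hanti (by simp : (0:ℝ) ∈ Set.Icc (0:ℝ) 1)
      (by simp : (1:ℝ) ∈ Set.Icc (0:ℝ) 1) zero_le_one
  have e1 : x + (1:ℝ) • Δ = y := by simp [hΔ]
  have e0 : x + (0:ℝ) • Δ = x := by simp
  simp only [hψ, e1, e0, one_pow, mul_one, one_mul, zero_mul, mul_zero, sub_zero,
    zero_pow, ne_eq] at key
  nlinarith [key]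

/-- Growth of the lower-level residual in the upper-level variable: with
`∇_x g` `L_g`-Lipschitz in each variable, `G(x) = min_y g(x,y)` attained at `y*(x)` with
quadratic growth, `∇G(x) = ∇_x g(x,y*(x))` and `∇G` `L_G`-Lipschitz (`L_G ≥ L_g`), then
for all `x, x⁺, y, γ > 0, ρ_l > 0`,
`g(x⁺,y) − G(x⁺) ≤ (1 + 4L_g²γ/(μρ_l))(g(x,y) − G(x)) + (ρ_l/(8γ) + L_G)‖x⁺ − x‖²`. -/
theorem stmt_11 {d p : ℕ} (μ Lg LG : ℝ) (hμ : 0 < μ) (hLG : Lg ≤ LG)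
    (g : EuclideanSpace ℝ (Fin d) → EuclideanSpace ℝ (Fin p) → ℝ)
    (gx : EuclideanSpace ℝ (Fin d) → EuclideanSpace ℝ (Fin p) → EuclideanSpace ℝ (Fin d))
    (hgx : ∀ x y, HasGradientAt (fun x' => g x' y) (gx x y) x)
    (hlipy : ∀ x y₁ y₂, ‖gx x y₁ - gx x y₂‖ ≤ Lg * ‖y₁ - y₂‖)
    (hlipx : ∀ x₁ x₂ y, ‖gx x₁ y - gx x₂ y‖ ≤ Lg * ‖x₁ - x₂‖)
    (G : EuclideanSpace ℝ (Fin d) → ℝ)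
    (ystar : EuclideanSpace ℝ (Fin d) → EuclideanSpace ℝ (Fin p))
    (hGval : ∀ x, g x (ystar x) = G x) (hGlow : ∀ x y, G x ≤ g x y)
    (hQG : ∀ x y, g x y - G x ≥ (μ / 2) * ‖y - ystar x‖ ^ 2)
    (hGgrad : ∀ x, HasGradientAt G (gx x (ystar x)) x)
    (hGlip : ∀ x₁ x₂, ‖gx x₁ (ystar x₁) - gx x₂ (ystar x₂)‖ ≤ LG * ‖x₁ - x₂‖) :
    ∀ (x xp : EuclideanSpace ℝ (Fin d)) (y : EuclideanSpace ℝ (Fin p)) (γ ρl : ℝ),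
      0 < γ → 0 < ρl →
      g xp y - G xp ≤ (1 + 4 * Lg ^ 2 * γ / (μ * ρl)) * (g x y - G x)
        + (ρl / (8 * γ) + LG) * ‖xp - x‖ ^ 2 := by
  intro x xp y γ ρl hγ hρl
  set φ : EuclideanSpace ℝ (Fin d) → ℝ := fun z => g z y - G z with hφ
  set φ' : EuclideanSpace ℝ (Fin d) → EuclideanSpace ℝ (Fin d) :=
    fun z => gx z y - gx z (ystar z) with hφ'
  have hgrad : ∀ z, HasGradientAt φ (φ' z) z := by
    intro z
    have h1 := hasGradientAt_iff_hasFDerivAt.mp (hgx z y)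
    have h2 := hasGradientAt_iff_hasFDerivAt.mp (hGgrad z)
    have h3 : HasGradientAt (fun z' => g z' y - G z')
        (gx z y - gx z (ystar z)) z := by
      rw [hasGradientAt_iff_hasFDerivAt, map_sub]
      exact h1.sub h2
    exact h3
  have hlipφ : ∀ a b, ‖φ' a - φ' b‖ ≤ (Lg + LG) * ‖a - b‖ := by
    intro a b
    have t1 := hlipx a b y
    have t2 := hGlip a b
    calc ‖φ' a - φ' b‖ = ‖(gx a y - gx b y) - (gx a (ystar a) - gx b (ystar b))‖ := by
          simp only [hφ']; congr 1; abel
      _ ≤ ‖gx a y - gx b y‖ + ‖gx a (ystar a) - gx b (ystar b)‖ := norm_sub_le _ _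
      _ ≤ Lg * ‖a - b‖ + LG * ‖a - b‖ := add_le_add t1 t2
      _ = (Lg + LG) * ‖a - b‖ := by ring
  have hdesc := descent_lemma φ φ' (Lg + LG) hgrad hlipφ x xp
  -- bound on the gradient norm squared
  have hA : 0 ≤ φ x := sub_nonneg.mpr (hGlow x y)
  have hN : ‖φ' x‖ ≤ Lg * ‖y - ystar x‖ := by
    simpa [hφ'] using hlipy x y (ystar x)
  have hN2 : ‖φ' x‖ ^ 2 ≤ Lg ^ 2 * ‖y - ystar x‖ ^ 2 := by
    have h := pow_le_pow_left₀ (norm_nonneg (φ' x)) hN 2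
    rwa [mul_pow] at h
  have hy2 : μ * ‖y - ystar x‖ ^ 2 ≤ 2 * φ x := by
    have := hQG x y
    simp only [hφ]
    linarith
  have hN2' : μ * ‖φ' x‖ ^ 2 ≤ 2 * Lg ^ 2 * φ x := by
    nlinarith [mul_le_mul_of_nonneg_left hy2 (sq_nonneg Lg),
      mul_le_mul_of_nonneg_left hN2 hμ.le]
  -- Young's inequality with ε = ρl / (4γ)
  set ε : ℝ := ρl / (4 * γ) with hε
  have hεpos : 0 < ε := by positivity
  set N := ‖φ' x‖ with hNdef
  set B := ‖xp - x‖ with hB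
  have hNn : 0 ≤ N := norm_nonneg _
  have hBn : 0 ≤ B := norm_nonneg _
  have hyoung : N * B ≤ N ^ 2 / (2 * ε) + ε / 2 * B ^ 2 := by
    rw [div_add' _ _ _ (by positivity), le_div_iff₀ (by positivity)]
    nlinarith [sq_nonneg (N - ε * B)]
  have hinner : ⟪φ' x, xp - x⟫ ≤ N * B := real_inner_le_norm _ _
  have hmid : N ^ 2 / (2 * ε) ≤ (4 * Lg ^ 2 * γ / (μ * ρl)) * φ x := by
    rw [div_le_iff₀ (by positivity : (0:ℝ) < 2 * ε), hε]
    have heq : 4 * Lg ^ 2 * γ / (μ * ρl) * φ x * (2 * (ρl / (4 * γ)))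
        = 2 * Lg ^ 2 * φ x / μ := by
      field_simp
    rw [heq, le_div_iff₀ hμ]
    linarith [hN2']
  have hεhalf : ε / 2 = ρl / (8 * γ) := by
    rw [hε, div_div, show (4 * γ * 2 : ℝ) = 8 * γ from by ring]
  rw [hεhalf] at hyoung
  have hquad : (Lg + LG) / 2 * B ^ 2 ≤ LG * B ^ 2 := by
    nlinarith [sq_nonneg B, hLG]
  have hineq : ⟪φ' x, xp - x⟫ ≤ (4 * Lg ^ 2 * γ / (μ * ρl)) * φ x + ρl / (8 * γ) * B ^ 2 := by
    calc ⟪φ' x, xp - x⟫ ≤ N * B := hinner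
      _ ≤ N ^ 2 / (2 * ε) + ρl / (8 * γ) * B ^ 2 := hyoung
      _ ≤ (4 * Lg ^ 2 * γ / (μ * ρl)) * φ x + ρl / (8 * γ) * B ^ 2 :=
          add_le_add hmid le_rfl
  have : φ xp ≤ φ x + ⟪φ' x, xp - x⟫ + (Lg + LG) / 2 * B ^ 2 := hdesc
  have goal : φ xp ≤ (1 + 4 * Lg ^ 2 * γ / (μ * ρl)) * φ x + (ρl / (8 * γ) + LG) * B ^ 2 := by
    linarith [this, hineq, hquad]
  simp only [hφ] at goal
  exact goal
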